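/- For every natural number k, the compositions of elementary Sturmian morphisms satisfy φ_α ∘ φ_a^k ∘ φ_β = φ_β ∘ φ_b^k ∘ φ_α as morphisms on binary words. -/

import Mathlib

/-- φ_a : 0 ↦ 0, 1 ↦ 10. -/
def φa : Monoid.End (FreeMonoid Bool) :=
  FreeMonoid.lift fun x => if x then FreeMonoid.of true * FreeMonoid.of false else FreeMonoid.of false

/-- φ_b : 0 ↦ 0, 1 ↦ 01. -/
def φb : Monoid.End (FreeMonoid Bool) :=
  FreeMonoid.lift fun x => if x then FreeMonoid.of false * FreeMonoid.of true else FreeMonoid.of false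

/-- φ_α : 0 ↦ 01, 1 ↦ 1. -/
def φα : Monoid.End (FreeMonoid Bool) :=
  FreeMonoid.lift fun x => if x then FreeMonoid.of true else FreeMonoid.of false * FreeMonoid.of true

/-- φ_β : 0 ↦ 10, 1 ↦ 1. -/
def φβ : Monoid.End (FreeMonoid Bool) :=
  FreeMonoid.lift fun x => if x then FreeMonoid.of true else FreeMonoid.of true * FreeMonoid.of false

/-- The exchange morphism E : 0 ↦ 1, 1 ↦ 0. -/
def Eend : Monoid.End (FreeMonoid Bool) := FreeMonoid.map not

lemma end_mul_apply (f g : Monoid.End (FreeMonoid Bool)) (x : FreeMonoid Bool) :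
    (f * g) x = f (g x) := rfl

lemma φa_true : φa (FreeMonoid.of true) = FreeMonoid.of true * FreeMonoid.of false := rfl
lemma φa_false : φa (FreeMonoid.of false) = FreeMonoid.of false := rfl
lemma φb_true : φb (FreeMonoid.of true) = FreeMonoid.of false * FreeMonoid.of true := rfl
lemma φb_false : φb (FreeMonoid.of false) = FreeMonoid.of false := rfl
lemma φα_true : φα (FreeMonoid.of true) = FreeMonoid.of true := rfl
lemma φα_false : φα (FreeMonoid.of false) = FreeMonoid.of false * FreeMonoid.of true := rfl
lemma φβ_true : φβ (FreeMonoid.of true) = FreeMonoid.of true := rfl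
lemma φβ_false : φβ (FreeMonoid.of false) = FreeMonoid.of true * FreeMonoid.of false := rfl

lemma φa_pow_false (k : ℕ) : (φa ^ k) (FreeMonoid.of false) = FreeMonoid.of false := by
  induction k with
  | zero => rfl
  | succ n ih => rw [pow_succ, end_mul_apply, φa_false, ih]

lemma φa_pow_true (k : ℕ) : (φa ^ k) (FreeMonoid.of true)
    = FreeMonoid.of true * (FreeMonoid.of false) ^ k := by
  induction k with
  | zero => simp
  | succ n ih =>
      rw [pow_succ', end_mul_apply, ih, map_mul, map_pow, φa_true, φa_false, mul_assoc,
        ← pow_succ']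

lemma φb_pow_false (k : ℕ) : (φb ^ k) (FreeMonoid.of false) = FreeMonoid.of false := by
  induction k with
  | zero => rfl
  | succ n ih => rw [pow_succ, end_mul_apply, φb_false, ih]

lemma φb_pow_true (k : ℕ) : (φb ^ k) (FreeMonoid.of true)
    = (FreeMonoid.of false) ^ k * FreeMonoid.of true := by
  induction k with
  | zero => simp
  | succ n ih =>
      rw [pow_succ', end_mul_apply, ih, map_mul, map_pow, φb_true, φb_false, ← mul_assoc,
        ← pow_succ]

lemma key {M : Type*} [Monoid M] (a b : M) (n : ℕ) : a * (b * a) ^ n = (a * b) ^ n * a := by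
  induction n with
  | zero => simp
  | succ m ih =>
      rw [pow_succ', ← mul_assoc, ← mul_assoc a b a, mul_assoc (a*b), ih, ← mul_assoc,
        ← pow_succ']


/-- φ_α ∘ φ_a^k ∘ φ_β = φ_β ∘ φ_b^k ∘ φ_α (multiplication in `Monoid.End` is composition). -/
theorem sturmian_relation_greek (k : ℕ) : φα * φa ^ k * φβ = φβ * φb ^ k * φα := by
  apply FreeMonoid.hom_eq
  intro x
  change φα ((φa ^ k) (φβ (FreeMonoid.of x))) = φβ ((φb ^ k) (φα (FreeMonoid.of x)))
  cases x
  · simp only [φβ_false, φα_false, map_mul, map_pow, φa_pow_true, φa_pow_false, φb_pow_true,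
      φb_pow_false, φα_true, φα_false, φβ_true, φβ_false]
    rw [mul_assoc, ← pow_succ, key, ← mul_assoc, ← pow_succ', pow_succ, mul_assoc]
  · simp only [φβ_true, φα_true, φa_pow_true, φb_pow_true, map_mul, map_pow, φα_true,
      φα_false, φβ_true, φβ_false]
    exact key _ _ k
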